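/- There exists a constant C > 0 such that for every sign μ ∈ {+1, −1} and all ξ, η ∈ ℝ² with 0 < |ξ| ≤ 2^{−10} |η|: |(L̂_ξ + L̂_η) Φ^{μ,−μ}(ξ, η) + 4 μ (λ′(|η|²) + λ″(|η|²)|η|²) (ξ·η)| ≤ C |ξ|², where L̂_ξ := −ξ·∇_ξ and L̂_η := −η·∇_η. -/

import Mathlib

noncomputable section

abbrev E2 : Type := EuclideanSpace ℝ (Fin 2)

/-- Euclidean dot product on ℝ². -/
def dotE (x y : E2) : ℝ := ∑ i : Fin 2, x i * y i

/-- `Λ(r) = r^{3/2} (tanh r)^{1/2}`. -/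
def Lam (r : ℝ) : ℝ := r ^ ((3 : ℝ) / 2) * Real.sqrt (Real.tanh r)

/-- `λ(x) = Λ(√x)`. -/
def lam (x : ℝ) : ℝ := Lam (Real.sqrt x)

/-- The phase `Φ^{μ,ν}(ξ,η) = Λ(|ξ|) − μ Λ(|ξ−η|) − ν Λ(|η|)`. -/
def Phi (μ ν : ℝ) (ξ η : E2) : ℝ := Lam ‖ξ‖ - μ * Lam ‖ξ - η‖ - ν * Lam ‖η‖

namespace S13

/-- `w = x^{1/4}` -/
def Wf (x : ℝ) : ℝ := Real.sqrt (Real.sqrt x)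

/-- `s = (tanh √x)^{1/2}` -/
def Sf (x : ℝ) : ℝ := Real.sqrt (Real.tanh (Real.sqrt x))

/-- first derivative of `lam` on `(0,∞)` -/
def lam1 (x : ℝ) : ℝ :=
  3/4 * (Sf x / Wf x) + 1/4 * (Wf x / Sf x) * (1 - Sf x ^ 4)

/-- second derivative of `lam` on `(0,∞)` -/
def lam2 (x : ℝ) : ℝ :=
  -(3/16) * (Sf x / Wf x ^ 5) + 1/4 * ((1 - Sf x ^ 4) / (Wf x ^ 3 * Sf x))
    - 1/16 * ((1 - Sf x ^ 4) * (1 + 3 * Sf x ^ 4) / (Wf x * Sf x ^ 3))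

/-- derivative of `g(x) = x·lam1(x)` -/
def G1 (x : ℝ) : ℝ :=
  9/16 * (Sf x / Wf x) + 1/2 * (Wf x / Sf x) * (1 - Sf x ^ 4)
    - 1/16 * (Wf x / Sf x) ^ 3 * (1 - Sf x ^ 4) * (1 + 3 * Sf x ^ 4)

/-- derivative of `G1` -/
def G2 (x : ℝ) : ℝ :=
  (1/x) * (-(9/64) * (Sf x / Wf x) + 17/64 * (Wf x / Sf x) * (1 - Sf x ^ 4)
    - 11/64 * (Wf x / Sf x) ^ 3 * (1 - Sf x ^ 4) * (1 + 3 * Sf x ^ 4)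
    + 1/64 * (Wf x / Sf x) ^ 5 * (1 - Sf x ^ 4)
        * (15 * Sf x ^ 8 - 2 * Sf x ^ 4 + 3))


/-! ### tanh helper lemmas -/

lemma tanh_pos {t : ℝ} (h : 0 < t) : 0 < Real.tanh t := by
  rw [Real.tanh_eq_sinh_div_cosh]
  exact div_pos (Real.sinh_pos_iff.mpr h) (Real.cosh_pos t)

lemma tanh_lt_one (t : ℝ) : Real.tanh t < 1 := by
  rw [Real.tanh_eq_sinh_div_cosh, div_lt_one (Real.cosh_pos t)]
  nlinarith [Real.cosh_sub_sinh t, Real.exp_pos (-t)]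

lemma tanh_nonneg {t : ℝ} (h : 0 ≤ t) : 0 ≤ Real.tanh t := by
  rcases eq_or_lt_of_le h with rfl | h'
  · simp [Real.tanh_zero]
  · exact (tanh_pos h').le

lemma tanh_le_self {t : ℝ} (h : 0 ≤ t) : Real.tanh t ≤ t := by
  have hmono : MonotoneOn (fun y : ℝ => y * Real.cosh y - Real.sinh y) (Set.Ici 0) := by
    have hd : ∀ y : ℝ, HasDerivAt (fun y : ℝ => y * Real.cosh y - Real.sinh y)
        (y * Real.sinh y) y := by
      intro y
      have h1 := ((hasDerivAt_id y).mul (Real.hasDerivAt_cosh y)).sub (Real.hasDerivAt_sinh y)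
      refine h1.congr_deriv ?_
      simp only [id_eq]
      ring
    apply monotoneOn_of_deriv_nonneg (convex_Ici 0)
    · exact (Continuous.sub (continuous_id.mul Real.continuous_cosh)
        Real.continuous_sinh).continuousOn
    · intro y hy
      exact (hd y).differentiableAt.differentiableWithinAt
    · intro y hy
      rw [interior_Ici] at hy
      rw [(hd y).deriv]
      exact mul_nonneg (le_of_lt hy) (Real.sinh_nonneg_iff.mpr (le_of_lt hy))
  have key : Real.sinh t ≤ t * Real.cosh t := by
    have := hmono (Set.self_mem_Ici) (Set.mem_Ici.mpr h) h
    simpa using this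
  rw [Real.tanh_eq_sinh_div_cosh, div_le_iff₀ (Real.cosh_pos t)]
  exact key

lemma half_le_tanh {t : ℝ} (h0 : 0 ≤ t) (h1 : t ≤ 1) : t / 2 ≤ Real.tanh t := by
  have hs : t ≤ Real.sinh t := by
    rcases eq_or_lt_of_le h0 with rfl | h'
    · simp
    · exact (Real.self_lt_sinh_iff.mpr h').le
  have hc : Real.cosh t ≤ 2 := by
    have h2 : Real.cosh t ≤ Real.cosh 1 := by
      rw [Real.cosh_le_cosh]
      rw [abs_of_nonneg h0, abs_one]; exact h1
    have h3 : Real.cosh 1 < 2 := by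
      rw [Real.cosh_eq]
      have := Real.exp_one_lt_d9
      have h4 : Real.exp (-1) < 1 := Real.exp_lt_one_iff.mpr (by norm_num)
      linarith
    linarith
  rw [Real.tanh_eq_sinh_div_cosh, le_div_iff₀ (Real.cosh_pos t)]
  nlinarith [Real.cosh_pos t]

lemma one_sub_tanh_le {t : ℝ} : 1 - Real.tanh t ≤ 2 * Real.exp (-(2*t)) := by
  have hc : Real.exp t / 2 ≤ Real.cosh t := by
    rw [Real.cosh_eq]
    have := Real.exp_pos (-t)
    linarith
  have h1 : 1 - Real.tanh t = Real.exp (-t) / Real.cosh t := by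
    rw [Real.tanh_eq_sinh_div_cosh]
    field_simp
    all_goals linarith [Real.cosh_sub_sinh t]
  rw [h1]
  have h2 : Real.exp (-(2*t)) = Real.exp (-t) * (Real.exp (-t)) := by
    rw [← Real.exp_add]; ring_nf
  rw [h2, div_le_iff₀ (Real.cosh_pos t)]
  have h3 := Real.exp_pos (-t)
  have h4 : Real.exp (-t) * Real.exp t = 1 := by rw [← Real.exp_add]; simp
  nlinarith [Real.cosh_pos t, Real.exp_pos t]

lemma one_sub_tanh_sq_le {t : ℝ} (h : 0 ≤ t) :
    1 - Real.tanh t ^ 2 ≤ 4 * Real.exp (-(2*t)) := by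
  have h1 := one_sub_tanh_le (t := t)
  have h2 : Real.tanh t < 1 := tanh_lt_one t
  have h3 : 0 ≤ Real.tanh t := tanh_nonneg h
  nlinarith [Real.exp_pos (-(2*t))]

lemma exp_cube_bound {u : ℝ} (h : 0 ≤ u) : (8/27) * u^3 ≤ Real.exp (2*u) := by
  have h1 := Real.add_one_le_exp (2*u/3)
  have h2 : (2*u/3)^3 ≤ (Real.exp (2*u/3))^3 := by
    apply pow_le_pow_left₀ (by positivity)
    linarith
  have h3 : (Real.exp (2*u/3))^3 = Real.exp (2*u) := by
    rw [← Real.exp_nat_mul, show ((3:ℕ):ℝ) * (2*u/3) = 2*u by push_cast; ring]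
  calc (8/27) * u^3 = (2*u/3)^3 := by ring
    _ ≤ Real.exp (2*u) := h3 ▸ h2

lemma tanh_ge_half_of_one_le {t : ℝ} (h : 1 ≤ t) : 1/2 ≤ Real.tanh t := by
  have h1 := one_sub_tanh_le (t := t)
  have h2 : Real.exp (-(2*t)) ≤ Real.exp (-2) := by
    apply Real.exp_le_exp.mpr; linarith
  have h3 : Real.exp (-2) ≤ 1/4 := by
    rw [Real.exp_neg]
    rw [show ((2:ℝ)) = 1 + 1 by norm_num, Real.exp_add]
    have := Real.exp_one_gt_d9
    rw [inv_le_comm₀ (by positivity) (by norm_num)]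
    nlinarith
  linarith

/-! ### basic facts about `Wf` and `Sf` -/

lemma Wf_pos {x : ℝ} (hx : 0 < x) : 0 < Wf x :=
  Real.sqrt_pos.mpr (Real.sqrt_pos.mpr hx)

lemma Sf_pos {x : ℝ} (hx : 0 < x) : 0 < Sf x :=
  Real.sqrt_pos.mpr (tanh_pos (Real.sqrt_pos.mpr hx))

lemma Wf_sq {x : ℝ} (hx : 0 ≤ x) : Wf x ^ 2 = Real.sqrt x :=
  Real.sq_sqrt (Real.sqrt_nonneg x)

lemma Wf_pow4 {x : ℝ} (hx : 0 ≤ x) : Wf x ^ 4 = x := by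
  have h1 : Wf x ^ 4 = (Wf x ^ 2) ^ 2 := by ring
  rw [h1, Wf_sq hx, Real.sq_sqrt hx]

lemma Sf_sq {x : ℝ} (hx : 0 ≤ x) : Sf x ^ 2 = Real.tanh (Real.sqrt x) :=
  Real.sq_sqrt (tanh_nonneg (Real.sqrt_nonneg x))

lemma Sf_le_one {x : ℝ} (hx : 0 < x) : Sf x ≤ 1 := by
  have h1 : Sf x ≤ Real.sqrt 1 := Real.sqrt_le_sqrt (tanh_lt_one _).le
  simpa using h1

lemma Sf_le_Wf {x : ℝ} (hx : 0 < x) : Sf x ≤ Wf x :=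
  Real.sqrt_le_sqrt (tanh_le_self (Real.sqrt_nonneg x))

lemma sigma_nonneg {x : ℝ} (hx : 0 < x) : 0 ≤ 1 - Sf x ^ 4 := by
  have h1 := pow_le_one₀ (Sf_pos hx).le (Sf_le_one hx) (n := 4)
  linarith

lemma sigma_le_one {x : ℝ} (hx : 0 < x) : 1 - Sf x ^ 4 ≤ 1 := by
  have h2 := pow_pos (Sf_pos hx) 4
  linarith

/-- The central bound: `(w/s)^k (1 - s^4) ≤ 108` for `k ≤ 5`. -/
lemma q_pow_bound {x : ℝ} (hx : 0 < x) {k : ℕ} (hk : k ≤ 5) :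
    (Wf x / Sf x) ^ k * (1 - Sf x ^ 4) ≤ 108 := by
  have hW := Wf_pos hx
  have hS := Sf_pos hx
  have hq : 0 < Wf x / Sf x := div_pos hW hS
  have hσ0 := sigma_nonneg hx
  have hσ1 := sigma_le_one hx
  rcases le_or_gt (Wf x / Sf x) 1 with hq1 | hq1
  · have : (Wf x / Sf x) ^ k ≤ 1 := pow_le_one₀ hq.le hq1
    nlinarith
  -- now q > 1 ; bound q^k by q^6 = (q^2)^3
  have hk6 : (Wf x / Sf x) ^ k ≤ ((Wf x / Sf x) ^ 2) ^ 3 := by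
    rw [← pow_mul]
    exact pow_le_pow_right₀ hq1.le (by omega)
  have hq2 : (Wf x / Sf x) ^ 2 = Real.sqrt x / Real.tanh (Real.sqrt x) := by
    rw [div_pow, Wf_sq hx.le, Sf_sq hx.le]
  have htpos : 0 < Real.tanh (Real.sqrt x) := tanh_pos (Real.sqrt_pos.mpr hx)
  have hu : 0 < Real.sqrt x := Real.sqrt_pos.mpr hx
  rcases le_or_gt (Real.sqrt x) 1 with hx1 | hx1
  · -- small case : q² ≤ 2
    have ht2 : Real.sqrt x / 2 ≤ Real.tanh (Real.sqrt x) := half_le_tanh hu.le hx1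
    have hq2le : (Wf x / Sf x) ^ 2 ≤ 2 := by
      rw [hq2, div_le_iff₀ htpos]; linarith
    have h8 : ((Wf x / Sf x) ^ 2) ^ 3 ≤ 8 := by
      calc ((Wf x / Sf x) ^ 2) ^ 3 ≤ 2 ^ 3 := pow_le_pow_left₀ (sq_nonneg _) hq2le 3
        _ = 8 := by norm_num
    nlinarith [pow_pos hq k, hk6, h8]
  · -- large case
    set u := Real.sqrt x with hudef
    have ht12 : 1/2 ≤ Real.tanh u := tanh_ge_half_of_one_le hx1.le
    have hq2le : (Wf x / Sf x) ^ 2 ≤ 2 * u := by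
      rw [hq2, div_le_iff₀ htpos]; nlinarith
    have hq6 : ((Wf x / Sf x) ^ 2) ^ 3 ≤ 8 * u ^ 3 := by
      calc ((Wf x / Sf x) ^ 2) ^ 3 ≤ (2*u)^3 := by
            apply pow_le_pow_left₀ (sq_nonneg _) hq2le
        _ = 8 * u^3 := by ring
    have hσ : 1 - Sf x ^ 4 ≤ 4 * Real.exp (-(2*u)) := by
      have h1 : Sf x ^ 4 = Real.tanh u ^ 2 := by
        rw [show Sf x ^ 4 = (Sf x ^ 2) ^ 2 by ring, Sf_sq hx.le]
      rw [h1]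
      exact one_sub_tanh_sq_le hu.le
    have hexp : Real.exp (-(2*u)) ≤ 27 / (8 * u^3) := by
      have hcube := exp_cube_bound hu.le
      rw [Real.exp_neg, inv_le_comm₀ (Real.exp_pos _) (by positivity)]
      rw [show ((27:ℝ)/(8*u^3))⁻¹ = (8/27)*u^3 by rw [inv_div]; ring]
      linarith
    calc (Wf x / Sf x) ^ k * (1 - Sf x ^ 4)
        ≤ (8 * u^3) * (4 * Real.exp (-(2*u))) := by
          apply mul_le_mul (hk6.trans hq6) hσ hσ0
          positivity
      _ ≤ (8 * u^3) * (4 * (27 / (8*u^3))) := by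
          apply mul_le_mul_of_nonneg_left (by linarith) (by positivity)
      _ = 108 := by
          have hu3 : u^3 ≠ 0 := by positivity
          field_simp
          norm_num

lemma hasDerivAt_tanh (t : ℝ) : HasDerivAt Real.tanh (1 - Real.tanh t ^ 2) t := by
  have h := (Real.hasDerivAt_sinh t).div (Real.hasDerivAt_cosh t) (Real.cosh_pos t).ne'
  have heq : Real.tanh = fun y => Real.sinh y / Real.cosh y :=
    funext fun y => Real.tanh_eq_sinh_div_cosh y
  rw [heq]
  refine h.congr_deriv ?_
  symm
  show 1 - (Real.sinh t / Real.cosh t) ^ 2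
      = (Real.cosh t * Real.cosh t - Real.sinh t * Real.sinh t) / Real.cosh t ^ 2
  have hc := (Real.cosh_pos t).ne'
  have hid := Real.cosh_sq_sub_sinh_sq t
  field_simp

lemma hasDerivAt_W {x : ℝ} (hx : 0 < x) : HasDerivAt Wf (1 / (4 * Wf x ^ 3)) x := by
  have hu : 0 < Real.sqrt x := Real.sqrt_pos.mpr hx
  have h1 := Real.hasDerivAt_sqrt hx.ne'
  have h2 := Real.hasDerivAt_sqrt hu.ne'
  have h := h2.comp x h1
  have heq : Wf = Real.sqrt ∘ Real.sqrt := rfl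
  rw [heq]
  refine h.congr_deriv ?_
  symm
  have hW := Wf_pos hx
  have hWsq : Wf x ^ 2 = Real.sqrt x := Wf_sq hx.le
  show 1 / (4 * Wf x ^ 3) = 1 / (2 * Real.sqrt (Real.sqrt x)) * (1 / (2 * Real.sqrt x))
  rw [← hWsq, show Real.sqrt (Wf x ^ 2) = Wf x from Real.sqrt_sq hW.le]
  field_simp
  ring

lemma hasDerivAt_S {x : ℝ} (hx : 0 < x) :
    HasDerivAt Sf ((1 - Sf x ^ 4) / (4 * Sf x * Wf x ^ 2)) x := by
  have hu : 0 < Real.sqrt x := Real.sqrt_pos.mpr hx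
  have ht : 0 < Real.tanh (Real.sqrt x) := tanh_pos hu
  have h1 := Real.hasDerivAt_sqrt hx.ne'
  have h2 := hasDerivAt_tanh (Real.sqrt x)
  have h3 := Real.hasDerivAt_sqrt ht.ne'
  have h := (h3.comp (Real.sqrt x) h2).comp x h1
  have heq : Sf = fun y => Real.sqrt (Real.tanh (Real.sqrt y)) := rfl
  rw [heq]
  refine h.congr_deriv ?_
  symm
  have hS := Sf_pos hx
  have hW := Wf_pos hx
  have hSs : Sf x ^ 2 = Real.tanh (Real.sqrt x) := Sf_sq hx.le
  have hWsq : Wf x ^ 2 = Real.sqrt x := Wf_sq hx.le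
  show (1 - Sf x ^ 4) / (4 * Sf x * Wf x ^ 2)
      = 1 / (2 * Real.sqrt (Real.tanh (Real.sqrt x))) * (1 - Real.tanh (Real.sqrt x) ^ 2)
        * (1 / (2 * Real.sqrt x))
  rw [← hSs, show Real.sqrt (Sf x ^ 2) = Sf x from Real.sqrt_sq hS.le, ← hWsq]
  field_simp
  ring

lemma lam_eq_WS : lam = fun x => Wf x ^ 3 * Sf x := by
  funext x
  rcases le_or_gt x 0 with hx | hx
  · have h0 : Real.sqrt x = 0 := Real.sqrt_eq_zero_of_nonpos hx
    rw [lam, Lam, h0, Wf, Sf, h0]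
    simp [Real.tanh_zero, Real.zero_rpow (by norm_num : ((3:ℝ)/2) ≠ 0)]
  · rw [lam, Lam]
    show (Real.sqrt x) ^ ((3:ℝ)/2) * Real.sqrt (Real.tanh (Real.sqrt x)) = Wf x ^ 3 * Sf x
    have h2 : Real.sqrt (Real.tanh (Real.sqrt x)) = Sf x := rfl
    rw [h2]
    congr 1
    rw [← Wf_sq hx.le, ← Real.rpow_natCast (Wf x) 2, ← Real.rpow_mul (Wf_pos hx).le,
      show ((2:ℕ):ℝ) * ((3:ℝ)/2) = ((3:ℕ):ℝ) by push_cast; ring, Real.rpow_natCast]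

lemma hasDerivAt_lam {x : ℝ} (hx : 0 < x) : HasDerivAt lam (lam1 x) x := by
  rw [lam_eq_WS]
  have h := ((hasDerivAt_W hx).pow 3).mul (hasDerivAt_S hx)
  refine h.congr_deriv ?_
  simp only [Pi.pow_apply]
  have hW := Wf_pos hx
  have hS := Sf_pos hx
  rw [lam1]
  field_simp
  ring

lemma hasDerivAt_lam1 {x : ℝ} (hx : 0 < x) : HasDerivAt lam1 (lam2 x) x := by
  have hW := Wf_pos hx
  have hS := Sf_pos hx
  have hWd := hasDerivAt_W hx
  have hSd := hasDerivAt_S hx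
  have h1 := hSd.div hWd hW.ne'
  have h2 := hWd.div hSd hS.ne'
  have h4 : HasDerivAt (fun y => 1 - Sf y ^ 4)
      (-(((4:ℕ):ℝ) * Sf x ^ (4-1) * ((1 - Sf x ^ 4) / (4 * Sf x * Wf x ^ 2)))) x :=
    (hSd.pow 4).const_sub 1
  have h := (h1.const_mul (3/4)).add ((h2.const_mul (1/4)).mul h4)
  have heq : lam1 = fun y => 3/4 * (Sf y / Wf y) + 1/4 * (Wf y / Sf y) * (1 - Sf y ^ 4) := rfl
  rw [heq]
  refine h.congr_deriv ?_
  simp only [Pi.div_apply]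
  rw [lam2]
  field_simp
  ring

lemma G1_eq {x : ℝ} (hx : 0 < x) : G1 x = lam1 x + x * lam2 x := by
  have hW := Wf_pos hx
  have hS := Sf_pos hx
  rw [G1, lam1, lam2]
  set w := Wf x with hw
  set s := Sf x with hs
  rw [show x = w ^ 4 from by rw [hw]; exact (Wf_pow4 hx.le).symm]
  field_simp
  ring

lemma hasDerivAt_G1 {x : ℝ} (hx : 0 < x) : HasDerivAt G1 (G2 x) x := by
  have hW := Wf_pos hx
  have hS := Sf_pos hx
  have hWd := hasDerivAt_W hx
  have hSd := hasDerivAt_S hx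
  have h1 := hSd.div hWd hW.ne'
  have h2 := hWd.div hSd hS.ne'
  have h2c := (hWd.div hSd hS.ne').pow 3
  have h4 : HasDerivAt (fun y => 1 - Sf y ^ 4)
      (-(((4:ℕ):ℝ) * Sf x ^ (4-1) * ((1 - Sf x ^ 4) / (4 * Sf x * Wf x ^ 2)))) x :=
    (hSd.pow 4).const_sub 1
  have h5 : HasDerivAt (fun y => 1 + 3 * Sf y ^ 4)
      (3 * (((4:ℕ):ℝ) * Sf x ^ (4-1) * ((1 - Sf x ^ 4) / (4 * Sf x * Wf x ^ 2)))) x := by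
    have := ((hSd.pow 4).const_mul 3).const_add 1
    exact this.congr_deriv rfl
  have h := ((h1.const_mul (9/16)).add ((h2.const_mul (1/2)).mul h4)).sub
    (((h2c.const_mul (1/16)).mul h4).mul h5)
  have heq : G1 = fun y => 9/16 * (Sf y / Wf y) + 1/2 * (Wf y / Sf y) * (1 - Sf y ^ 4)
      - 1/16 * (Wf y / Sf y) ^ 3 * (1 - Sf y ^ 4) * (1 + 3 * Sf y ^ 4) := rfl
  rw [heq]
  refine h.congr_deriv ?_
  simp only [Pi.div_apply, Pi.pow_apply, Pi.mul_apply, Nat.reduceSub]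
  rw [G2]
  set w := Wf x with hw
  set s := Sf x with hs
  rw [show x = w ^ 4 from by rw [hw]; exact (Wf_pow4 hx.le).symm]
  field_simp
  ring

lemma basic_facts {x : ℝ} (hx : 0 < x) :
    0 ≤ Sf x / Wf x ∧ Sf x / Wf x ≤ 1 ∧ Sf x ^ 4 ≤ 1 := by
  refine ⟨(div_nonneg (Sf_pos hx).le (Wf_pos hx).le), ?_, ?_⟩
  · rw [div_le_one (Wf_pos hx)]; exact Sf_le_Wf hx
  · exact pow_le_one₀ (Sf_pos hx).le (Sf_le_one hx)

lemma abs_lam1_le {x : ℝ} (hx : 0 < x) : |lam1 x| ≤ 200 := by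
  obtain ⟨h0, h1, hT⟩ := basic_facts hx
  have hσ0 := sigma_nonneg hx
  have hq1 := q_pow_bound hx (k := 1) (by norm_num)
  rw [pow_one] at hq1
  have hq10 : (0:ℝ) ≤ Wf x / Sf x * (1 - Sf x ^ 4) :=
    mul_nonneg (div_nonneg (Wf_pos hx).le (Sf_pos hx).le) hσ0
  rw [lam1, abs_le]
  constructor <;> nlinarith

lemma abs_G1_le {x : ℝ} (hx : 0 < x) : |G1 x| ≤ 200 := by
  obtain ⟨h0, h1, hT⟩ := basic_facts hx
  have hσ0 := sigma_nonneg hx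
  have hT0 : (0:ℝ) ≤ Sf x ^ 4 := by positivity
  have hp : (0:ℝ) ≤ 1 + 3 * Sf x ^ 4 := by positivity
  have hq1 := q_pow_bound hx (k := 1) (by norm_num)
  rw [pow_one] at hq1
  have hq3 := q_pow_bound hx (k := 3) (by norm_num)
  have hq10 : (0:ℝ) ≤ Wf x / Sf x * (1 - Sf x ^ 4) :=
    mul_nonneg (div_nonneg (Wf_pos hx).le (Sf_pos hx).le) hσ0
  have hq30 : (0:ℝ) ≤ (Wf x / Sf x) ^ 3 * (1 - Sf x ^ 4) :=
    mul_nonneg (pow_nonneg (div_nonneg (Wf_pos hx).le (Sf_pos hx).le) 3) hσ0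
  have hmul3 : (Wf x / Sf x) ^ 3 * (1 - Sf x ^ 4) * (1 + 3 * Sf x ^ 4) ≤ 432 := by
    calc (Wf x / Sf x) ^ 3 * (1 - Sf x ^ 4) * (1 + 3 * Sf x ^ 4) ≤ 108 * 4 :=
          mul_le_mul hq3 (by linarith) hp (by norm_num)
      _ = 432 := by norm_num
  have hmul30 : (0:ℝ) ≤ (Wf x / Sf x) ^ 3 * (1 - Sf x ^ 4) * (1 + 3 * Sf x ^ 4) :=
    mul_nonneg hq30 hp
  rw [G1, abs_le]
  constructor <;> nlinarith

lemma abs_xG2_le {x : ℝ} (hx : 0 < x) : |x * G2 x| ≤ 200 := by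
  obtain ⟨h0, h1, hT⟩ := basic_facts hx
  have hσ0 := sigma_nonneg hx
  have hT0 : (0:ℝ) ≤ Sf x ^ 4 := by positivity
  have hp : (0:ℝ) ≤ 1 + 3 * Sf x ^ 4 := by positivity
  have hq1 := q_pow_bound hx (k := 1) (by norm_num)
  rw [pow_one] at hq1
  have hq3 := q_pow_bound hx (k := 3) (by norm_num)
  have hq5 := q_pow_bound hx (k := 5) (by norm_num)
  have hq10 : (0:ℝ) ≤ Wf x / Sf x * (1 - Sf x ^ 4) :=
    mul_nonneg (div_nonneg (Wf_pos hx).le (Sf_pos hx).le) hσ0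
  have hq30 : (0:ℝ) ≤ (Wf x / Sf x) ^ 3 * (1 - Sf x ^ 4) :=
    mul_nonneg (pow_nonneg (div_nonneg (Wf_pos hx).le (Sf_pos hx).le) 3) hσ0
  have hq50 : (0:ℝ) ≤ (Wf x / Sf x) ^ 5 * (1 - Sf x ^ 4) :=
    mul_nonneg (pow_nonneg (div_nonneg (Wf_pos hx).le (Sf_pos hx).le) 5) hσ0
  have hmul3 : (Wf x / Sf x) ^ 3 * (1 - Sf x ^ 4) * (1 + 3 * Sf x ^ 4) ≤ 432 := by
    calc (Wf x / Sf x) ^ 3 * (1 - Sf x ^ 4) * (1 + 3 * Sf x ^ 4) ≤ 108 * 4 :=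
          mul_le_mul hq3 (by linarith) hp (by norm_num)
      _ = 432 := by norm_num
  have hmul30 : (0:ℝ) ≤ (Wf x / Sf x) ^ 3 * (1 - Sf x ^ 4) * (1 + 3 * Sf x ^ 4) :=
    mul_nonneg hq30 hp
  have hS8 : Sf x ^ 8 = (Sf x ^ 4) ^ 2 := by ring
  have hp5 : (0:ℝ) ≤ 15 * Sf x ^ 8 - 2 * Sf x ^ 4 + 3 := by
    rw [hS8]; nlinarith [sq_nonneg (Sf x ^ 4 - 1), sq_nonneg (Sf x ^ 4)]
  have hp5' : 15 * Sf x ^ 8 - 2 * Sf x ^ 4 + 3 ≤ 18 := by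
    rw [hS8]; nlinarith
  have hmul5 : (Wf x / Sf x) ^ 5 * (1 - Sf x ^ 4) * (15 * Sf x ^ 8 - 2 * Sf x ^ 4 + 3)
      ≤ 1944 := by
    calc (Wf x / Sf x) ^ 5 * (1 - Sf x ^ 4) * (15 * Sf x ^ 8 - 2 * Sf x ^ 4 + 3)
        ≤ 108 * 18 := mul_le_mul hq5 hp5' hp5 (by norm_num)
      _ = 1944 := by norm_num
  have hmul50 : (0:ℝ) ≤ (Wf x / Sf x) ^ 5 * (1 - Sf x ^ 4)
      * (15 * Sf x ^ 8 - 2 * Sf x ^ 4 + 3) := mul_nonneg hq50 hp5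
  have hkey : x * G2 x
      = -(9/64) * (Sf x / Wf x) + 17/64 * (Wf x / Sf x) * (1 - Sf x ^ 4)
        - 11/64 * (Wf x / Sf x) ^ 3 * (1 - Sf x ^ 4) * (1 + 3 * Sf x ^ 4)
        + 1/64 * (Wf x / Sf x) ^ 5 * (1 - Sf x ^ 4)
            * (15 * Sf x ^ 8 - 2 * Sf x ^ 4 + 3) := by
    rw [G2, ← mul_assoc, mul_one_div, div_self hx.ne', one_mul]
  rw [hkey, abs_le]
  constructor <;> nlinarith

lemma deriv_lam_eq {x : ℝ} (hx : 0 < x) : deriv lam x = lam1 x :=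
  (hasDerivAt_lam hx).deriv

lemma deriv_deriv_lam_eq {x : ℝ} (hx : 0 < x) : deriv (deriv lam) x = lam2 x := by
  have hev : deriv lam =ᶠ[nhds x] lam1 :=
    Filter.eventuallyEq_of_mem (Ioi_mem_nhds hx) fun t ht => deriv_lam_eq ht
  rw [hev.deriv_eq]
  exact (hasDerivAt_lam1 hx).deriv

/-- the function `g(x) = x λ'(x)` -/
def g (x : ℝ) : ℝ := x * lam1 x

lemma hasDerivAt_g {x : ℝ} (hx : 0 < x) : HasDerivAt g (G1 x) x := by
  have h := (hasDerivAt_id x).mul (hasDerivAt_lam1 hx)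
  rw [G1_eq hx]
  exact h.congr_deriv (by simp)

/-- Taylor estimate for `g` -/
lemma taylor_g {b c : ℝ} (hc : 0 < c) (hb : c/2 ≤ b) :
    |g b - g c - G1 c * (b - c)| ≤ (400/c) * (b - c)^2 := by
  have hc2 : (0:ℝ) < c/2 := by linarith
  have hsub : Set.uIcc b c ⊆ Set.Ici (c/2) := by
    intro t ht
    rcases Set.mem_uIcc.mp ht with ⟨h1, h2⟩ | ⟨h1, h2⟩ <;> simp only [Set.mem_Ici] <;> linarith
  have hmem : ∀ t ∈ Set.uIcc b c, (0:ℝ) < t := fun t ht => lt_of_lt_of_le hc2 (hsub ht)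
  have habs : ∀ t ∈ Set.uIcc b c, |t - c| ≤ |b - c| := by
    intro t ht
    rcases Set.mem_uIcc.mp ht with ⟨h1, h2⟩ | ⟨h1, h2⟩ <;> rw [abs_sub_le_iff] <;>
      constructor <;>
      nlinarith [le_abs_self (b - c), neg_abs_le (b - c), abs_nonneg (b - c)]
  -- step 1 : G1 is Lipschitz on the interval with constant 400/c
  have hlip : ∀ t ∈ Set.uIcc b c, |G1 t - G1 c| ≤ (400/c) * |b - c| := by
    intro t ht
    have h1 : ‖G1 t - G1 c‖ ≤ (400/c) * ‖t - c‖ := by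
      apply (convex_uIcc b c).norm_image_sub_le_of_norm_hasDerivWithin_le
        (f' := G2) (fun y hy => ((hasDerivAt_G1 (hmem y hy)).hasDerivWithinAt))
        ?_ Set.right_mem_uIcc ht
      intro y hy
      have hy0 := hmem y hy
      have hy2 : c/2 ≤ y := hsub hy
      have h2 : |y * G2 y| ≤ 200 := abs_xG2_le hy0
      rw [abs_mul, abs_of_pos hy0] at h2
      rw [Real.norm_eq_abs, show (400:ℝ)/c = 200/(c/2) by ring, le_div_iff₀ hc2]
      nlinarith [abs_nonneg (G2 y)]
    rw [Real.norm_eq_abs, Real.norm_eq_abs] at h1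
    exact h1.trans (mul_le_mul_of_nonneg_left (habs t ht) (by positivity))
  -- step 2
  have key : ‖(g b - G1 c * b) - (g c - G1 c * c)‖ ≤ ((400/c) * |b - c|) * ‖b - c‖ := by
    apply (convex_uIcc b c).norm_image_sub_le_of_norm_hasDerivWithin_le
      (f := fun t => g t - G1 c * t) (f' := fun t => G1 t - G1 c)
      ?_ ?_ Set.right_mem_uIcc Set.left_mem_uIcc
    · intro y hy
      have h := ((hasDerivAt_g (hmem y hy)).sub ((hasDerivAt_id y).const_mul (G1 c)))
      have h2 : G1 y - G1 c * 1 = G1 y - G1 c := by ring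
      rw [h2] at h
      exact h.hasDerivWithinAt
    · intro y hy
      rw [Real.norm_eq_abs]
      exact hlip y hy
  rw [Real.norm_eq_abs, Real.norm_eq_abs] at key
  calc |g b - g c - G1 c * (b - c)| = |(g b - G1 c * b) - (g c - G1 c * c)| := by ring_nf
    _ ≤ (400/c) * |b - c| * |b - c| := key
    _ = (400/c) * (b-c)^2 := by rw [mul_assoc, ← abs_mul, ← sq, abs_sq]

lemma lam_normsq (v : E2) : lam (‖v‖^2) = Lam ‖v‖ := by
  rw [lam, Real.sqrt_sq (norm_nonneg v)]

lemma abs_mu {μ : ℝ} (hμ : μ = 1 ∨ μ = -1) : |μ| = 1 := by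
  rcases hμ with rfl | rfl <;> norm_num

lemma tri (x y z : ℝ) : |x + y + z| ≤ |x| + |y| + |z| :=
  (abs_add_le _ _).trans (by linarith [abs_add_le x y])

/-- The key scalar inequality. -/
lemma keyIneq (μ nξ nη d : ℝ) (hμ : μ = 1 ∨ μ = -1) (hξ : 0 < nξ)
    (hη4 : nξ ≤ nη / 4) (hd : |d| ≤ nξ * nη) :
    |(-(2 * (nξ^2 * lam1 (nξ^2))) + 2 * μ * (g (nξ^2 - 2*d + nη^2) - g (nη^2)))
        + 4 * μ * (G1 (nη^2)) * d| ≤ 8000 * nξ^2 := by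
  have hη0 : 0 < nη := by linarith
  set a := nξ^2 with ha
  set c := nη^2 with hc'
  set b := a - 2*d + c with hbdef
  have ha0 : 0 < a := by positivity
  have hc0 : 0 < c := by positivity
  have hd1 : d ≤ nξ * nη := (le_abs_self d).trans hd
  have hd2 : -(nξ * nη) ≤ d := neg_le_of_abs_le hd
  have hb2 : c/2 ≤ b := by
    rw [hbdef, ha, hc']; nlinarith
  have hT := taylor_g hc0 hb2
  have hbc : b - c = a - 2*d := by rw [hbdef]; ring
  have habs3 : |nξ^2 - 2*d| ≤ 3 * (nξ * nη) := by
    rw [abs_le]; constructor <;> nlinarith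
  have hbc2 : (b - c)^2 ≤ 9 * a * c := by
    rw [hbc, ha, hc']
    calc (nξ^2 - 2*d)^2 = |nξ^2 - 2*d|^2 := (sq_abs _).symm
      _ ≤ (3 * (nξ * nη))^2 := by
          apply pow_le_pow_left₀ (abs_nonneg _) habs3
      _ = 9 * nξ^2 * nη^2 := by ring
  have hTa : (400/c) * (b - c)^2 ≤ 3600 * a := by
    rw [div_mul_eq_mul_div, div_le_iff₀ hc0]; nlinarith
  have hga : |g a| ≤ 200 * a := by
    rw [g, abs_mul, abs_of_pos ha0]
    nlinarith [abs_lam1_le ha0]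
  have hG1c : |G1 c| ≤ 200 := abs_G1_le hc0
  have hμ1 : |μ| = 1 := abs_mu hμ
  have hEeq : (-(2 * (a * lam1 a)) + 2 * μ * (g b - g c)) + 4 * μ * (G1 c) * d
      = (-(2 * (a * lam1 a))) + (2 * μ * (g b - g c - G1 c * (b - c))) + (2 * μ * (G1 c * a)) := by
    rw [hbc]; ring
  rw [hEeq]
  have h1 : |(-(2 * (a * lam1 a)))| ≤ 400 * a := by
    rw [abs_neg]
    calc |2 * (a * lam1 a)| = 2 * |g a| := by rw [abs_mul, abs_of_nonneg (by norm_num : (0:ℝ) ≤ 2), g]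
      _ ≤ 400 * a := by linarith
  have h2 : |2 * μ * (g b - g c - G1 c * (b - c))| ≤ 7200 * a := by
    rw [abs_mul, abs_mul, hμ1, abs_of_nonneg (by norm_num : (0:ℝ) ≤ 2)]
    calc 2 * 1 * |g b - g c - G1 c * (b - c)| ≤ 2 * ((400/c) * (b-c)^2) := by linarith
      _ ≤ 7200 * a := by linarith
  have h3 : |2 * μ * (G1 c * a)| ≤ 400 * a := by
    rw [abs_mul, abs_mul, hμ1, abs_mul, abs_of_pos ha0, abs_of_nonneg (by norm_num : (0:ℝ) ≤ 2)]
    nlinarith [abs_nonneg (G1 c)]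
  calc _ ≤ _ := tri _ _ _
    _ ≤ 8000 * a := by linarith

lemma hasGradientAt_left (μ ν : ℝ) (ξ η : E2) (hξ : ξ ≠ 0) (hξη : ξ - η ≠ 0) :
    HasGradientAt (fun ζ : E2 => Phi μ ν ζ η)
      ((2 * lam1 (‖ξ‖^2)) • ξ - (2 * (μ * lam1 (‖ξ - η‖^2))) • (ξ - η)) ξ := by
  have h1 : (0:ℝ) < ‖ξ‖^2 := pow_pos (norm_pos_iff.mpr hξ) 2
  have h2 : (0:ℝ) < ‖ξ - η‖^2 := pow_pos (norm_pos_iff.mpr hξη) 2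
  have hfun : (fun ζ : E2 => Phi μ ν ζ η)
      = fun ζ => lam (‖ζ‖^2) - μ * lam (‖ζ - η‖^2) - ν * Lam ‖η‖ := by
    funext ζ; rw [Phi, lam_normsq, lam_normsq]
  rw [hfun, hasGradientAt_iff_hasFDerivAt]
  have hN1 : HasFDerivAt (fun ζ : E2 => ‖ζ‖^2) (2 • (innerSL ℝ ξ)) ξ :=
    (hasStrictFDerivAt_norm_sq ξ).hasFDerivAt
  have hN2 : HasFDerivAt (fun ζ : E2 => ‖ζ - η‖^2) (2 • (innerSL ℝ (ξ - η))) ξ := by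
    have hid : HasFDerivAt (fun ζ : E2 => ζ - η) (ContinuousLinearMap.id ℝ E2) ξ :=
      (hasFDerivAt_id ξ).sub_const η
    simpa using hid.norm_sq
  have hl1 := (hasDerivAt_lam h1).comp_hasFDerivAt ξ hN1
  have hl2 := (hasDerivAt_lam h2).comp_hasFDerivAt ξ hN2
  have hD := ((hl1.sub (hl2.const_mul μ)).sub_const (ν * Lam ‖η‖))
  refine hD.congr_fderiv ?_
  ext y
  simp only [InnerProductSpace.toDual_apply_apply, ContinuousLinearMap.coe_sub', Pi.sub_apply,
    ContinuousLinearMap.coe_smul', Pi.smul_apply, innerSL_apply_apply, smul_eq_mul,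
    inner_sub_left, real_inner_smul_left]
  ring

lemma hasGradientAt_right (μ ν : ℝ) (ξ η : E2) (hη : η ≠ 0) (hξη : ξ - η ≠ 0) :
    HasGradientAt (fun ζ : E2 => Phi μ ν ξ ζ)
      ((2 * (μ * lam1 (‖ξ - η‖^2))) • (ξ - η) - (2 * (ν * lam1 (‖η‖^2))) • η) η := by
  have h1 : (0:ℝ) < ‖η‖^2 := pow_pos (norm_pos_iff.mpr hη) 2
  have h2 : (0:ℝ) < ‖ξ - η‖^2 := pow_pos (norm_pos_iff.mpr hξη) 2
  have hfun : (fun ζ : E2 => Phi μ ν ξ ζ)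
      = fun ζ => Lam ‖ξ‖ - μ * lam (‖ξ - ζ‖^2) - ν * lam (‖ζ‖^2) := by
    funext ζ; rw [Phi, lam_normsq, lam_normsq]
  rw [hfun, hasGradientAt_iff_hasFDerivAt]
  have hN1 : HasFDerivAt (fun ζ : E2 => ‖ζ‖^2) (2 • (innerSL ℝ η)) η :=
    (hasStrictFDerivAt_norm_sq η).hasFDerivAt
  have hN2 : HasFDerivAt (fun ζ : E2 => ‖ξ - ζ‖^2)
      (2 • ((innerSL ℝ) η - (innerSL ℝ) ξ)) η := by
    have hid : HasFDerivAt (fun ζ : E2 => ξ - ζ) (-(ContinuousLinearMap.id ℝ E2)) η :=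
      (hasFDerivAt_id η).const_sub ξ
    simpa using hid.norm_sq
  have hl1 := (hasDerivAt_lam h1).comp_hasFDerivAt η hN1
  have hl2 := (hasDerivAt_lam h2).comp_hasFDerivAt η hN2
  have hD := ((hasFDerivAt_const (Lam ‖ξ‖) η).sub (hl2.const_mul μ)).sub (hl1.const_mul ν)
  refine hD.congr_fderiv ?_
  ext y
  simp only [InnerProductSpace.toDual_apply_apply, ContinuousLinearMap.coe_sub', Pi.sub_apply,
    ContinuousLinearMap.coe_smul', Pi.smul_apply, innerSL_apply_apply, smul_eq_mul,
    ContinuousLinearMap.comp_apply, ContinuousLinearMap.neg_apply,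
    ContinuousLinearMap.coe_id', id_eq, ContinuousLinearMap.zero_apply,
    inner_sub_left, real_inner_smul_left, inner_neg_right]
  ring

lemma dotE_eq (x y : E2) : dotE x y = inner ℝ x y := by
  simp [dotE, PiLp.inner_apply, RCLike.inner_apply, starRingEnd_apply]; ring

end S13

theorem stmt13 :
    ∃ C : ℝ, 0 < C ∧
      ∀ μ : ℝ, (μ = 1 ∨ μ = -1) →
        ∀ ξ η : E2, 0 < ‖ξ‖ → ‖ξ‖ ≤ (2 : ℝ) ^ (-10 : ℤ) * ‖η‖ →
          |(-(dotE ξ (gradient (fun ζ : E2 => Phi μ (-μ) ζ η) ξ)) -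
              dotE η (gradient (fun ζ : E2 => Phi μ (-μ) ξ ζ) η)) +
              4 * μ * (deriv lam (‖η‖ ^ 2) + deriv (deriv lam) (‖η‖ ^ 2) * ‖η‖ ^ 2) * dotE ξ η| ≤
            C * ‖ξ‖ ^ 2 := by
  use 8000, by norm_num
  intro μ hμ ξ η hξ hle
  have h1024 : ((2:ℝ) ^ (-10:ℤ)) = 1/1024 := by norm_num
  rw [h1024] at hle
  have hη : 0 < ‖η‖ := by nlinarith
  have hξ0 : ξ ≠ 0 := norm_pos_iff.mp hξ
  have hη0 : η ≠ 0 := norm_pos_iff.mp hη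
  have hη4 : ‖ξ‖ ≤ ‖η‖ / 4 := by linarith
  have hsubpos : 0 < ‖ξ - η‖ := by
    have h1 : ‖η‖ - ‖ξ‖ ≤ ‖ξ - η‖ := by
      have := abs_norm_sub_norm_le ξ η
      rw [abs_sub_le_iff] at this
      linarith [this.2]
    linarith
  have hξη0 : ξ - η ≠ 0 := norm_pos_iff.mp hsubpos
  have hc0 : (0:ℝ) < ‖η‖^2 := by positivity
  rw [(S13.hasGradientAt_left μ (-μ) ξ η hξ0 hξη0).gradient,
    (S13.hasGradientAt_right μ (-μ) ξ η hη0 hξη0).gradient]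
  rw [S13.deriv_lam_eq hc0, S13.deriv_deriv_lam_eq hc0]
  have hco : S13.lam1 (‖η‖^2) + S13.lam2 (‖η‖^2) * ‖η‖^2 = S13.G1 (‖η‖^2) := by
    rw [S13.G1_eq hc0]; ring
  rw [hco]
  rw [S13.dotE_eq, S13.dotE_eq, S13.dotE_eq]
  rw [inner_sub_right, inner_sub_right, real_inner_smul_right, real_inner_smul_right,
    real_inner_smul_right, real_inner_smul_right, inner_sub_right, inner_sub_right,
    real_inner_self_eq_norm_sq, real_inner_self_eq_norm_sq,
    real_inner_comm η ξ]
  have hb : ‖ξ - η‖^2 = ‖ξ‖^2 - 2 * inner ℝ ξ η + ‖η‖^2 := by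
    rw [norm_sub_sq_real]
  have hd : |inner ℝ ξ η| ≤ ‖ξ‖ * ‖η‖ := abs_real_inner_le_norm ξ η
  have key := S13.keyIneq μ ‖ξ‖ ‖η‖ (inner ℝ ξ η) hμ hξ hη4 hd
  rw [← hb] at key
  refine le_trans (le_of_eq ?_) key
  congr 1
  simp only [S13.g]
  linear_combination (-(2 * μ * S13.lam1 (‖ξ - η‖^2))) * hb +
    (-(4 * μ * (S13.G1 (‖η‖^2) - S13.lam1 (‖ξ - η‖^2)))) * real_inner_comm η ξ

end
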